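/- Let u: Ω → ℝ be a C² solution on Ω ⊆ ℝ² of the [φ,e₃]-minimal equation (1+u_x²)u_{yy} + (1+u_y²)u_{xx} − 2u_xu_yu_{xy} = φ'(u)W², W = √(1+u_x²+u_y²), and let ϕ be a C³ convex potential with Hessian ϕ_{xx} = e^{φ(u)}(1+u_x²)/W, ϕ_{xy} = e^{φ(u)} u_x u_y/W, ϕ_{yy} = e^{φ(u)}(1+u_y²)/W. Let ϑ be a primitive of e^{φ} (ϑ' = e^{φ}). Then the map ψ̃(x,y) = (ϕ_x(x,y), ϕ_y(x,y), ϑ(u(x,y))) has Jacobian with positive determinant wherever W is finite, and the pullback under ψ̃ of the Lorentz quadratic form dx̃² + dỹ² − dz̃² equals e^{2φ(u)}/W² times the quadratic form induced by the Euclidean graph metric (1+u_x²)dx² + 2u_xu_y dxdy + (1+u_y²)dy²; in particular the image is a spacelike graph in Minkowski space 𝕃³. -/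

import Mathlib

open Real Set

/-- Conformality in the Calabi-type correspondence: for a `[φ,e₃]`-minimal
graph `u` with convex potential `ϕ` (Hessian `e^{φ(u)}/W · (I + ∇u ⊗ ∇u)`) and `ϑ` a
primitive of `e^{φ}`, the map `ψ̃ = (ϕ_x, ϕ_y, ϑ(u))` has Jacobian with positive
determinant, and the pullback of the Lorentz form `dx̃² + dỹ² − dz̃²` equals
`e^{2φ(u)}/W²` times the Euclidean graph metric `(1+u_x²)dx² + 2u_xu_y dxdy + (1+u_y²)dy²`;
in particular the image is a spacelike graph in `𝕃³`. -/
theorem stmt12 (Ω : Set (ℝ × ℝ)) (hΩ : IsOpen Ω)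
    (φ ϑ : ℝ → ℝ) (hϑ : ∀ t, HasDerivAt ϑ (Real.exp (φ t)) t)
    (u ux uy ϕ ϕx ϕy ϕxx ϕxy ϕyy W : ℝ × ℝ → ℝ)
    (hW : ∀ p, W p = Real.sqrt (1 + (ux p) ^ 2 + (uy p) ^ 2))
    (hux : ∀ p ∈ Ω, HasDerivAt (fun x => u (x, p.2)) (ux p) p.1)
    (huy : ∀ p ∈ Ω, HasDerivAt (fun y => u (p.1, y)) (uy p) p.2)
    (hϕx : ∀ p ∈ Ω, HasDerivAt (fun x => ϕ (x, p.2)) (ϕx p) p.1)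
    (hϕy : ∀ p ∈ Ω, HasDerivAt (fun y => ϕ (p.1, y)) (ϕy p) p.2)
    (hϕxx : ∀ p ∈ Ω, HasDerivAt (fun x => ϕx (x, p.2)) (ϕxx p) p.1)
    (hϕxy : ∀ p ∈ Ω, HasDerivAt (fun y => ϕx (p.1, y)) (ϕxy p) p.2)
    (hϕyy : ∀ p ∈ Ω, HasDerivAt (fun y => ϕy (p.1, y)) (ϕyy p) p.2)
    (hHxx : ∀ p ∈ Ω, ϕxx p = Real.exp (φ (u p)) * (1 + (ux p) ^ 2) / W p)
    (hHxy : ∀ p ∈ Ω, ϕxy p = Real.exp (φ (u p)) * (ux p * uy p) / W p)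
    (hHyy : ∀ p ∈ Ω, ϕyy p = Real.exp (φ (u p)) * (1 + (uy p) ^ 2) / W p) :
    ∀ p ∈ Ω,
      0 < ϕxx p * ϕyy p - ϕxy p ^ 2 ∧
      (∀ ξ η : ℝ,
        (ϕxx p * ξ + ϕxy p * η) ^ 2 + (ϕxy p * ξ + ϕyy p * η) ^ 2
            - (Real.exp (φ (u p)) * (ux p * ξ + uy p * η)) ^ 2
          = Real.exp (2 * φ (u p)) / (W p) ^ 2 *
              ((1 + (ux p) ^ 2) * ξ ^ 2 + 2 * ux p * uy p * ξ * η
                + (1 + (uy p) ^ 2) * η ^ 2)) ∧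
      (∀ ξ η : ℝ, ¬(ξ = 0 ∧ η = 0) →
        0 < (ϕxx p * ξ + ϕxy p * η) ^ 2 + (ϕxy p * ξ + ϕyy p * η) ^ 2
            - (Real.exp (φ (u p)) * (ux p * ξ + uy p * η)) ^ 2) := by

  intro p hp
  have hE : (0:ℝ) < Real.exp (φ (u p)) := Real.exp_pos _
  have hWpos : 0 < W p := by rw [hW]; exact Real.sqrt_pos.mpr (by positivity)
  have hW2 : W p ^ 2 = 1 + (ux p) ^ 2 + (uy p) ^ 2 := by
    rw [hW]; exact Real.sq_sqrt (by positivity)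
  have hWne : W p ≠ 0 := hWpos.ne'
  have ha := hHxx p hp
  have hb := hHxy p hp
  have hc := hHyy p hp
  have hE2 : Real.exp (2 * φ (u p)) = Real.exp (φ (u p)) ^ 2 := by
    rw [two_mul, Real.exp_add, sq]
  have key : ∀ ξ η : ℝ,
      (ϕxx p * ξ + ϕxy p * η) ^ 2 + (ϕxy p * ξ + ϕyy p * η) ^ 2
          - (Real.exp (φ (u p)) * (ux p * ξ + uy p * η)) ^ 2
        = Real.exp (2 * φ (u p)) / (W p) ^ 2 *
            ((1 + (ux p) ^ 2) * ξ ^ 2 + 2 * ux p * uy p * ξ * η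
              + (1 + (uy p) ^ 2) * η ^ 2) := by
    intro ξ η
    rw [ha, hb, hc, hE2]
    field_simp
    linear_combination (-(ux p * ξ + uy p * η) ^ 2) * hW2
  refine ⟨?_, key, ?_⟩
  · have : ϕxx p * ϕyy p - ϕxy p ^ 2 = Real.exp (φ (u p)) ^ 2 := by
      rw [ha, hb, hc]
      field_simp
      linear_combination (-1) * hW2
    rw [this]; positivity
  · intro ξ η hne
    rw [key ξ η]
    have hform : 0 < (1 + (ux p) ^ 2) * ξ ^ 2 + 2 * ux p * uy p * ξ * η
        + (1 + (uy p) ^ 2) * η ^ 2 := by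
      have h : (1 + (ux p) ^ 2) * ξ ^ 2 + 2 * ux p * uy p * ξ * η
          + (1 + (uy p) ^ 2) * η ^ 2 = ξ ^ 2 + η ^ 2 + (ux p * ξ + uy p * η) ^ 2 := by
        ring
      rw [h]
      rcases not_and_or.mp hne with h1 | h1
      · have : 0 < ξ ^ 2 := by positivity
        nlinarith [sq_nonneg η, sq_nonneg (ux p * ξ + uy p * η)]
      · have : 0 < η ^ 2 := by positivity
        nlinarith [sq_nonneg ξ, sq_nonneg (ux p * ξ + uy p * η)]
    have hcoef : 0 < Real.exp (2 * φ (u p)) / (W p) ^ 2 := by positivity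
    exact mul_pos hcoef hform
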